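/- Let φ : [0,1] → [0,1] be upward continuous (no upward jumps) and define ŵ(v) = sup{ε : φ(ε) ≤ v} (with ŵ(v)=0 if the set is empty) and ŵ⁻¹(ε) = sup{v : ŵ(v) ≤ ε} (with value 0 if empty). Then ŵ is nondecreasing and φ(ε) ≥ ŵ⁻¹(ε) for every ε ∈ [0,1]. -/
import Mathlib


open Set

/-- If `φ : [0,1] → [0,1]` is upward continuous (no upward jumps) and satisfies `φ ε ≥ ε`,
then `ŵ(v) = sup {ε : φ ε ≤ v}` is nondecreasing, and its generalized inverse
`ŵ⁻¹(ε) = sup {v : ŵ v ≤ ε}` satisfies `ŵ⁻¹(ε) ≤ φ ε` for every `ε ∈ [0,1]`. -/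
theorem stmt16 (φ what whatinv : ℝ → ℝ)
    (hmap : ∀ ε ∈ Set.Icc (0:ℝ) 1, φ ε ∈ Set.Icc (0:ℝ) 1)
    (hge : ∀ ε ∈ Set.Icc (0:ℝ) 1, ε ≤ φ ε)
    (hup : ∀ x ∈ Set.Icc (0:ℝ) 1,
      ¬ (∃ δ > 0, ∀ η > 0, ∃ x' ∈ Set.Ioo (x - η) x ∩ Set.Icc (0:ℝ) 1,
            φ x' + δ < φ x) ∧
      ¬ (∃ δ > 0, ∀ η > 0, ∃ x' ∈ Set.Ioo x (x + η) ∩ Set.Icc (0:ℝ) 1,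
            φ x + δ < φ x'))
    (hwhat : ∀ v, what v = sSup {ε : ℝ | ε ∈ Set.Icc (0:ℝ) 1 ∧ φ ε ≤ v})
    (hwhatinv : ∀ ε, whatinv ε = sSup {v : ℝ | v ∈ Set.Icc (0:ℝ) 1 ∧ what v ≤ ε}) :
    Monotone what ∧ ∀ ε ∈ Set.Icc (0:ℝ) 1, whatinv ε ≤ φ ε := by
  have hbdd : ∀ v : ℝ, BddAbove {ε : ℝ | ε ∈ Set.Icc (0:ℝ) 1 ∧ φ ε ≤ v} := by
    intro v
    exact ⟨1, fun x hx => hx.1.2⟩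
  have hmono : Monotone what := by
    intro a b hab
    rw [hwhat, hwhat]
    apply Real.sSup_le
    · intro x hx
      exact le_csSup (hbdd b) ⟨hx.1, hx.2.trans hab⟩
    · exact Real.sSup_nonneg (fun x hx => hx.1.1)
  refine ⟨hmono, fun ε hε => ?_⟩
  rw [hwhatinv]
  apply Real.sSup_le
  · intro v hv
    obtain ⟨hv01, hwv⟩ := hv
    by_contra hlt
    push_neg at hlt
    -- φ ε < v
    have hφ01 := hmap ε hε
    have hε1 : ε < 1 := by
      rcases lt_or_eq_of_le hε.2 with h | h
      · exact h
      · exfalso; subst h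
        have := hge 1 hε; linarith [hv01.2]
    have hδ : (0:ℝ) < v - φ ε := by linarith
    have hnj := (hup ε hε).2
    push_neg at hnj
    obtain ⟨η, hη, hall⟩ := hnj (v - φ ε) hδ
    set x' := min (ε + η / 2) ((ε + 1) / 2) with hx'
    have hx'gt : ε < x' := by
      apply lt_min <;> linarith
    have hx'lt : x' < ε + η := by
      calc x' ≤ ε + η / 2 := min_le_left _ _
        _ < ε + η := by linarith
    have hx'le1 : x' ≤ 1 := by
      calc x' ≤ (ε + 1) / 2 := min_le_right _ _
        _ ≤ 1 := by linarith [hε.2]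
    have hx'mem : x' ∈ Set.Ioo ε (ε + η) ∩ Set.Icc (0:ℝ) 1 :=
      ⟨⟨hx'gt, hx'lt⟩, ⟨le_trans hε.1 hx'gt.le, hx'le1⟩⟩
    have hφx' : φ x' ≤ v := by
      have := hall x' hx'mem
      linarith
    have : x' ≤ what v := by
      rw [hwhat]
      exact le_csSup (hbdd v) ⟨⟨le_trans hε.1 hx'gt.le, hx'le1⟩, hφx'⟩
    linarith
  · exact (hmap ε hε).1
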